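/- Let S ⊆ [0,1] be measurable, η ∈ (0,1), B > 0, J_α ∈ ℤ with |S| ≤ 2^{-J_α+1}, and suppose every point ζ of a subset S' ⊆ S admits a dyadic interval I(ζ) ∋ ζ with |I(ζ)| ≥ η^B 2^{-J_α} and |I(ζ) ∩ S| ≥ η^B |I(ζ)|. Then S' can be covered by a collection 𝒞 of pairwise disjoint dyadic intervals, each of length between η^B 2^{-J_α} and η^{-B} 2^{-J_α+1}, with #𝒞 ≤ 2 η^{-2B}. -/

import Mathlib

open MeasureTheory Set ENNReal

def IsDyadicInterval (I : Set ℝ) : Prop :=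
  ∃ j n : ℤ, I = Ico ((n : ℝ) * 2 ^ (-j)) (((n : ℝ) + 1) * 2 ^ (-j))

lemma dyadic_sub {j k n m : ℤ} (hjk : j ≤ k) (x : ℝ)
    (hx1 : x ∈ Ico ((n : ℝ) * 2 ^ (-j)) (((n : ℝ) + 1) * 2 ^ (-j)))
    (hx2 : x ∈ Ico ((m : ℝ) * 2 ^ (-k)) (((m : ℝ) + 1) * 2 ^ (-k))) :
    Ico ((m : ℝ) * 2 ^ (-k)) (((m : ℝ) + 1) * 2 ^ (-k)) ⊆
      Ico ((n : ℝ) * 2 ^ (-j)) (((n : ℝ) + 1) * 2 ^ (-j)) := by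
  set d : ℕ := (k - j).toNat with hdd
  have hpk : (0:ℝ) < 2 ^ (-k) := by positivity
  have h2 : (2:ℝ) ^ (-j) = 2 ^ d * 2 ^ (-k) := by
    rw [← zpow_natCast (2:ℝ) d, ← zpow_add₀ (by norm_num : (2:ℝ) ≠ 0)]
    congr 1
    omega
  have key1 : n * 2 ^ d ≤ m := by
    have h1 : (n:ℝ) * 2 ^ (-j) < ((m:ℝ) + 1) * 2 ^ (-k) := lt_of_le_of_lt hx1.1 hx2.2
    rw [h2] at h1
    have h3 : (n:ℝ) * 2 ^ d < (m:ℝ) + 1 := by nlinarith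
    have h4 : (n * 2 ^ d : ℤ) < m + 1 := by exact_mod_cast h3
    omega
  have key2 : m + 1 ≤ (n + 1) * 2 ^ d := by
    have h1 : (m:ℝ) * 2 ^ (-k) < ((n:ℝ) + 1) * 2 ^ (-j) := lt_of_le_of_lt hx2.1 hx1.2
    rw [h2] at h1
    have h3 : (m:ℝ) < ((n:ℝ) + 1) * 2 ^ d := by nlinarith
    have h4 : (m : ℤ) < (n + 1) * 2 ^ d := by exact_mod_cast h3
    omega
  intro y hy
  have hk1 : ((n:ℝ) * 2 ^ d) ≤ (m:ℝ) := by exact_mod_cast key1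
  have hk2 : ((m:ℝ) + 1) ≤ ((n:ℝ) + 1) * 2 ^ d := by exact_mod_cast key2
  constructor
  · rw [h2]
    calc (n:ℝ) * (2 ^ d * 2 ^ (-k)) = ((n:ℝ) * 2 ^ d) * 2 ^ (-k) := by ring
    _ ≤ (m:ℝ) * 2 ^ (-k) := by nlinarith
    _ ≤ y := hy.1
  · rw [h2]
    calc y < ((m:ℝ) + 1) * 2 ^ (-k) := hy.2
    _ ≤ (((n:ℝ) + 1) * 2 ^ d) * 2 ^ (-k) := by nlinarith
    _ = ((n:ℝ) + 1) * (2 ^ d * 2 ^ (-k)) := by ring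

lemma dyadic_dichotomy {I J : Set ℝ} (hI : IsDyadicInterval I) (hJ : IsDyadicInterval J) :
    I ⊆ J ∨ J ⊆ I ∨ Disjoint I J := by
  obtain ⟨j, n, rfl⟩ := hI
  obtain ⟨k, m, rfl⟩ := hJ
  by_cases hD : Disjoint (Ico ((n : ℝ) * 2 ^ (-j)) (((n : ℝ) + 1) * 2 ^ (-j)))
      (Ico ((m : ℝ) * 2 ^ (-k)) (((m : ℝ) + 1) * 2 ^ (-k)))
  · exact Or.inr (Or.inr hD)
  · rw [Set.not_disjoint_iff] at hD
    obtain ⟨x, hx1, hx2⟩ := hD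
    rcases le_total j k with hle | hle
    · exact Or.inr (Or.inl (dyadic_sub hle x hx1 hx2))
    · exact Or.inl (dyadic_sub hle x hx2 hx1)

lemma dyadic_measurable {I : Set ℝ} (hI : IsDyadicInterval I) : MeasurableSet I := by
  obtain ⟨j, n, rfl⟩ := hI
  exact measurableSet_Ico

/-- the quantitative covering argument of Step 2 (Lemma 2). -/
theorem stmt_19 (S : Set ℝ) (hSm : MeasurableSet S) (hSsub : S ⊆ Icc (0 : ℝ) 1)
    (η B : ℝ) (hη0 : 0 < η) (hη1 : η < 1) (hB : 0 < B) (Jα : ℤ)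
    (hSvol : volume S ≤ ENNReal.ofReal ((2 : ℝ) ^ (-Jα + 1)))
    (S' : Set ℝ) (hS' : S' ⊆ S)
    (h : ∀ ζ ∈ S', ∃ I : Set ℝ, IsDyadicInterval I ∧ ζ ∈ I ∧
      ENNReal.ofReal (η ^ B * (2 : ℝ) ^ (-Jα)) ≤ volume I ∧
      ENNReal.ofReal (η ^ B) * volume I ≤ volume (I ∩ S)) :
    ∃ 𝒞 : Finset (Set ℝ),
      (∀ I ∈ 𝒞, IsDyadicInterval I) ∧
      (∀ I ∈ 𝒞, ∀ I' ∈ 𝒞, I ≠ I' → Disjoint I I') ∧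
      S' ⊆ ⋃ I ∈ 𝒞, I ∧
      (∀ I ∈ 𝒞, ENNReal.ofReal (η ^ B * (2 : ℝ) ^ (-Jα)) ≤ volume I ∧
        volume I ≤ ENNReal.ofReal (η ^ (-B) * (2 : ℝ) ^ (-Jα + 1))) ∧
      (𝒞.card : ℝ) ≤ 2 * η ^ (-(2 * B)) := by
  classical
  have hb : (0:ℝ) < η ^ B := Real.rpow_pos_of_pos hη0 B
  have hz : (0:ℝ) < (2:ℝ) ^ (-Jα) := by positivity
  have hz1 : (0:ℝ) < (2:ℝ) ^ (-Jα + 1) := by positivity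
  set ℓ : ℝ := η ^ B * 2 ^ (-Jα) with hℓdef
  have hℓ : 0 < ℓ := by positivity
  set L : ℝ := η ^ (-B) * 2 ^ (-Jα + 1) with hLdef
  have hL : 0 < L := by
    have : (0:ℝ) < η ^ (-B) := Real.rpow_pos_of_pos hη0 _
    positivity
  set T : Set (Set ℝ) := {I | IsDyadicInterval I ∧ (I ∩ S').Nonempty ∧
    ENNReal.ofReal (η ^ B * (2:ℝ) ^ (-Jα)) ≤ volume I ∧
    ENNReal.ofReal (η ^ B) * volume I ≤ volume (I ∩ S)} with hTdef
  -- basic facts about members of T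
  have hTfacts : ∀ I ∈ T, ∃ j n : ℤ,
      I = Ico ((n : ℝ) * 2 ^ (-j)) (((n : ℝ) + 1) * 2 ^ (-j)) ∧
      ℓ ≤ (2:ℝ) ^ (-j) ∧ (2:ℝ) ^ (-j) ≤ L ∧ 0 ≤ n ∧ (n:ℝ) ≤ 1 / ℓ := by
    rintro I ⟨⟨j, n, rfl⟩, ⟨ζ, hζI, hζS'⟩, hlow, hden⟩
    have hv : volume (Ico ((n:ℝ) * 2 ^ (-j)) (((n:ℝ) + 1) * 2 ^ (-j)))
        = ENNReal.ofReal ((2:ℝ) ^ (-j)) := by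
      rw [Real.volume_Ico]; congr 1; ring
    have hpj : (0:ℝ) < (2:ℝ) ^ (-j) := by positivity
    have hlen_lb : ℓ ≤ (2:ℝ) ^ (-j) := by
      rw [hv] at hlow
      exact (ENNReal.ofReal_le_ofReal_iff hpj.le).mp hlow
    have hub : η ^ B * (2:ℝ) ^ (-j) ≤ (2:ℝ) ^ (-Jα + 1) := by
      have h1 : ENNReal.ofReal (η ^ B * (2:ℝ) ^ (-j))
          ≤ ENNReal.ofReal ((2:ℝ) ^ (-Jα + 1)) := by
        rw [ENNReal.ofReal_mul hb.le, ← hv]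
        calc ENNReal.ofReal (η ^ B) * volume (Ico ((n:ℝ) * 2 ^ (-j)) (((n:ℝ) + 1) * 2 ^ (-j)))
            ≤ volume (Ico ((n:ℝ) * 2 ^ (-j)) (((n:ℝ) + 1) * 2 ^ (-j)) ∩ S) := hden
          _ ≤ volume S := measure_mono inter_subset_right
          _ ≤ _ := hSvol
      exact (ENNReal.ofReal_le_ofReal_iff hz1.le).mp h1
    have hlen_ub : (2:ℝ) ^ (-j) ≤ L := by
      rw [hLdef, Real.rpow_neg hη0.le, inv_mul_eq_div, le_div_iff₀ hb]
      linarith [hub]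
    have hζ01 : ζ ∈ Icc (0:ℝ) 1 := hSsub (hS' hζS')
    have hn0 : 0 ≤ n := by
      by_contra hc
      push_neg at hc
      have hc' : ((n:ℝ) + 1) ≤ 0 := by
        have : (n:ℝ) ≤ -1 := by exact_mod_cast (by omega : n ≤ -1)
        linarith
      have : ((n:ℝ) + 1) * 2 ^ (-j) ≤ 0 := mul_nonpos_of_nonpos_of_nonneg hc' hpj.le
      linarith [hζ01.1, hζI.2]
    have hnn : (0:ℝ) ≤ (n:ℝ) := by exact_mod_cast hn0
    have hn1 : (n:ℝ) ≤ 1 / ℓ := by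
      rw [le_div_iff₀ hℓ]
      calc (n:ℝ) * ℓ ≤ (n:ℝ) * 2 ^ (-j) := by nlinarith
        _ ≤ ζ := hζI.1
        _ ≤ 1 := hζ01.2
    exact ⟨j, n, rfl, hlen_lb, hlen_ub, hn0, hn1⟩
  -- T is finite
  have hTfin : T.Finite := by
    set j₁ : ℤ := ⌈-Real.logb 2 L⌉ with hj₁
    set j₂ : ℤ := ⌊-Real.logb 2 ℓ⌋ with hj₂
    set N : ℤ := ⌊(1:ℝ) / ℓ⌋ with hN
    apply Set.Finite.subset
      (Set.Finite.image (fun p : ℤ × ℤ => Ico ((p.2 : ℝ) * 2 ^ (-p.1)) (((p.2 : ℝ) + 1) * 2 ^ (-p.1)))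
        (((Set.finite_Icc j₁ j₂).prod (Set.finite_Icc 0 N))))
    intro I hI
    obtain ⟨j, n, rfl, h1, h2, h3, h4⟩ := hTfacts I hI
    have hpj : (0:ℝ) < (2:ℝ) ^ (-j) := by positivity
    have hlogj : Real.logb 2 ((2:ℝ) ^ (-j)) = (-j : ℤ) := by
      rw [← Real.rpow_intCast (2:ℝ) (-j)]
      exact Real.logb_rpow (by norm_num) (by norm_num)
    have hjle : j ≤ j₂ := by
      rw [hj₂, Int.le_floor]
      have := Real.logb_le_logb_of_le (by norm_num : (1:ℝ) < 2) hℓ h1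
      rw [hlogj] at this
      push_cast at this ⊢
      linarith
    have hjge : j₁ ≤ j := by
      rw [hj₁, Int.ceil_le]
      have := Real.logb_le_logb_of_le (by norm_num : (1:ℝ) < 2) hpj h2
      rw [hlogj] at this
      push_cast at this ⊢
      linarith
    have hnle : n ≤ N := by rw [hN, Int.le_floor]; exact h4
    exact ⟨(j, n), ⟨⟨hjge, hjle⟩, ⟨h3, hnle⟩⟩, rfl⟩
  -- maximal elements above any element
  have hmaxex : ∀ I ∈ T, ∃ M ∈ T, I ⊆ M ∧ ∀ J ∈ T, M ⊆ J → M = J := by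
    intro I hI
    have hfin' : {J ∈ T | I ⊆ J}.Finite := hTfin.subset (sep_subset _ _)
    obtain ⟨M, ⟨hMT, hIM⟩, hMmax⟩ :=
      Set.Finite.exists_maximalFor id _ hfin' ⟨I, hI, subset_rfl⟩
    exact ⟨M, hMT, hIM, fun J hJ hMJ => hMJ.antisymm (hMmax ⟨hJ, hIM.trans hMJ⟩ hMJ)⟩
  set 𝒞 : Finset (Set ℝ) :=
    hTfin.toFinset.filter (fun I => ∀ J ∈ T, I ⊆ J → I = J) with h𝒞
  have hmem : ∀ I, I ∈ 𝒞 ↔ I ∈ T ∧ ∀ J ∈ T, I ⊆ J → I = J := by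
    intro I
    rw [h𝒞, Finset.mem_filter, Set.Finite.mem_toFinset]
  refine ⟨𝒞, ?_, ?_, ?_, ?_, ?_⟩
  · intro I hI
    exact ((hmem I).mp hI).1.1
  · intro I hI I' hI' hne
    obtain ⟨hIT, hImax⟩ := (hmem I).mp hI
    obtain ⟨hI'T, hI'max⟩ := (hmem I').mp hI'
    rcases dyadic_dichotomy hIT.1 hI'T.1 with hsub | hsub | hd
    · exact absurd (hImax I' hI'T hsub) hne
    · exact absurd (hI'max I hIT hsub).symm hne
    · exact hd
  · intro ζ hζ
    obtain ⟨I, hIdy, hζI, hlow, hden⟩ := h ζ hζ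
    have hIT : I ∈ T := ⟨hIdy, ⟨ζ, hζI, hζ⟩, hlow, hden⟩
    obtain ⟨M, hMT, hIM, hMmax⟩ := hmaxex I hIT
    have hM𝒞 : M ∈ 𝒞 := (hmem M).mpr ⟨hMT, hMmax⟩
    exact Set.mem_biUnion hM𝒞 (hIM hζI)
  · intro I hI
    obtain ⟨hIT, _⟩ := (hmem I).mp hI
    refine ⟨hIT.2.2.1, ?_⟩
    obtain ⟨j, n, hEq, h1, h2, _, _⟩ := hTfacts I hIT
    rw [hEq, Real.volume_Ico]
    have : ((n:ℝ) + 1) * 2 ^ (-j) - (n:ℝ) * 2 ^ (-j) = (2:ℝ) ^ (-j) := by ring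
    rw [this]
    exact ENNReal.ofReal_le_ofReal h2
  · -- cardinality bound
    have hterm : ∀ I ∈ 𝒞, ENNReal.ofReal (η ^ B * (η ^ B * (2:ℝ) ^ (-Jα)))
        ≤ volume (I ∩ S) := by
      intro I hI
      obtain ⟨⟨_, _, hlow, hden⟩, _⟩ := (hmem I).mp hI
      calc ENNReal.ofReal (η ^ B * (η ^ B * (2:ℝ) ^ (-Jα)))
          = ENNReal.ofReal (η ^ B) * ENNReal.ofReal (η ^ B * (2:ℝ) ^ (-Jα)) :=
            ENNReal.ofReal_mul hb.le
        _ ≤ ENNReal.ofReal (η ^ B) * volume I := mul_le_mul_right hlow _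
        _ ≤ volume (I ∩ S) := hden
    have hpd : (↑𝒞 : Set (Set ℝ)).PairwiseDisjoint (fun I => I ∩ S) := by
      intro I hI J hJ hne
      obtain ⟨hIT, hImax⟩ := (hmem I).mp hI
      obtain ⟨hJT, hJmax⟩ := (hmem J).mp hJ
      have hd : Disjoint I J := by
        rcases dyadic_dichotomy hIT.1 hJT.1 with hsub | hsub | hd
        · exact absurd (hImax J hJT hsub) hne
        · exact absurd (hJmax I hIT hsub).symm hne
        · exact hd
      exact hd.mono inter_subset_left inter_subset_left
    have hsum : ∑ I ∈ 𝒞, volume (I ∩ S) ≤ volume S := by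
      rw [← measure_biUnion_finset hpd
        (fun I hI => (dyadic_measurable ((hmem I).mp hI).1.1).inter hSm)]
      exact measure_mono (Set.iUnion₂_subset fun I _ => inter_subset_right)
    have hcard : (𝒞.card : ℝ≥0∞) * ENNReal.ofReal (η ^ B * (η ^ B * (2:ℝ) ^ (-Jα)))
        ≤ ENNReal.ofReal ((2:ℝ) ^ (-Jα + 1)) := by
      calc (𝒞.card : ℝ≥0∞) * ENNReal.ofReal (η ^ B * (η ^ B * (2:ℝ) ^ (-Jα)))
          = ∑ _I ∈ 𝒞, ENNReal.ofReal (η ^ B * (η ^ B * (2:ℝ) ^ (-Jα))) := by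
            rw [Finset.sum_const, nsmul_eq_mul]
        _ ≤ ∑ I ∈ 𝒞, volume (I ∩ S) := Finset.sum_le_sum hterm
        _ ≤ volume S := hsum
        _ ≤ _ := hSvol
    have hreal : (𝒞.card : ℝ) * (η ^ B * (η ^ B * (2:ℝ) ^ (-Jα))) ≤ (2:ℝ) ^ (-Jα + 1) := by
      rw [← ENNReal.ofReal_natCast, ← ENNReal.ofReal_mul (by positivity)] at hcard
      exact (ENNReal.ofReal_le_ofReal_iff hz1.le).mp hcard
    have h2p : (2:ℝ) ^ (-Jα + 1) = 2 * 2 ^ (-Jα) := by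
      rw [zpow_add₀ (by norm_num : (2:ℝ) ≠ 0)]
      ring
    have h1 : (𝒞.card : ℝ) * (η ^ B * η ^ B) ≤ 2 := by
      rw [h2p] at hreal
      have := le_of_mul_le_mul_right
        (by nlinarith : ((𝒞.card : ℝ) * (η ^ B * η ^ B)) * 2 ^ (-Jα) ≤ 2 * 2 ^ (-Jα)) hz
      exact this
    have hinv : η ^ (-(2 * B)) = (η ^ B * η ^ B)⁻¹ := by
      rw [Real.rpow_neg hη0.le, ← Real.rpow_add hη0]
      ring_nf
    rw [hinv]
    calc (𝒞.card : ℝ) ≤ 2 / (η ^ B * η ^ B) := (le_div_iff₀ (by positivity)).mpr h1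
      _ = 2 * (η ^ B * η ^ B)⁻¹ := div_eq_mul_inv _ _
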